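/- Let X be a real inner product space and let u, v ∈ X be nonzero vectors with angle ∠(u,v) ≤ α for some 0 < α < π. Then the Gromov product (u|v)_0 = (‖u‖ + ‖v‖ - ‖u - v‖)/2 satisfies (u|v)_0 ≥ k·min(‖u‖, ‖v‖), where k = k(α) > 0 depends only on α; in fact one may take k = (1/2)(2 - √(2 - 2cos α)). -/

import Mathlib

open InnerProductGeometry

private lemma aux_sq (a b c s d : ℝ) (ha : 0 < a) (hab : a ≤ b) (hs : 0 ≤ s)
    (hs2 : s ≤ 2) (hsq : s ^ 2 = 2 - 2 * c) (hd : 0 ≤ d)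
    (hdsq : d ^ 2 ≤ a ^ 2 + b ^ 2 - 2 * (a * b * c)) : d ≤ b - a + a * s := by
  have hR : 0 ≤ b - a + a * s := by nlinarith [mul_nonneg ha.le hs]
  have hdsq2 : d ^ 2 ≤ a ^ 2 + b ^ 2 - 2 * a * b + a * b * s ^ 2 := by
    rw [hsq]; nlinarith [mul_pos ha (ha.trans_le hab)]
  have hsq' : d ^ 2 ≤ (b - a + a * s) ^ 2 := by
    nlinarith [mul_nonneg (mul_nonneg (mul_nonneg ha.le hs)
      (by linarith : (0:ℝ) ≤ b - a)) (by linarith : (0:ℝ) ≤ 2 - s)]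
  nlinarith [sq_nonneg (d + (b - a + a * s))]

/-- Angle lemma: if the angle between nonzero vectors `u, v` is at most `α < π`,
then the Gromov product `(u|v)_0 = (‖u‖ + ‖v‖ - ‖u - v‖)/2` is at least
`k(α) · min(‖u‖, ‖v‖)` with `k(α) = (1/2)(2 - √(2 - 2 cos α)) > 0`. -/
theorem stmt_0 {X : Type*} [NormedAddCommGroup X] [InnerProductSpace ℝ X]
    (u v : X) (hu : u ≠ 0) (hv : v ≠ 0) (α : ℝ) (hα0 : 0 < α) (hαπ : α < Real.pi)
    (hangle : InnerProductGeometry.angle u v ≤ α) :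
    0 < (1 / 2) * (2 - Real.sqrt (2 - 2 * Real.cos α)) ∧
    (1 / 2) * (2 - Real.sqrt (2 - 2 * Real.cos α)) * min ‖u‖ ‖v‖ ≤
      (‖u‖ + ‖v‖ - ‖u - v‖) / 2 := by
  set c := Real.cos α with hc
  set s := Real.sqrt (2 - 2 * c) with hsdef
  have hc1 : c ≤ 1 := Real.cos_le_one α
  have hcneg : -1 < c := by
    have := Real.cos_lt_cos_of_nonneg_of_le_pi hα0.le le_rfl hαπ
    simpa [Real.cos_pi] using this
  have hnn : (0:ℝ) ≤ 2 - 2 * c := by linarith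
  have hs0 : 0 ≤ s := Real.sqrt_nonneg _
  have hsq : s ^ 2 = 2 - 2 * c := Real.sq_sqrt hnn
  have hslt : s < 2 := by
    have h2 : s ^ 2 < 2 ^ 2 := by rw [hsq]; nlinarith
    exact lt_of_pow_lt_pow_left₀ 2 (by norm_num) h2
  have hk : 0 < (1 / 2) * (2 - s) := by nlinarith
  refine ⟨hk, ?_⟩
  have hcosle : c ≤ Real.cos (angle u v) :=
    Real.cos_le_cos_of_nonneg_of_le_pi (angle_nonneg u v) hαπ.le hangle
  have hinner : Real.cos (angle u v) * (‖u‖ * ‖v‖) = inner ℝ u v :=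
    cos_angle_mul_norm_mul_norm u v
  have hun : 0 < ‖u‖ := norm_pos_iff.mpr hu
  have hvn : 0 < ‖v‖ := norm_pos_iff.mpr hv
  have hinnge : ‖u‖ * ‖v‖ * c ≤ inner ℝ u v := by
    rw [← hinner]
    have := mul_le_mul_of_nonneg_right hcosle (by positivity : (0:ℝ) ≤ ‖u‖ * ‖v‖)
    linarith
  have hnorm : ‖u - v‖ ^ 2 = ‖u‖ ^ 2 - 2 * inner ℝ u v + ‖v‖ ^ 2 :=
    norm_sub_sq_real u v
  have hdsq : ‖u - v‖ ^ 2 ≤ ‖u‖ ^ 2 + ‖v‖ ^ 2 - 2 * (‖u‖ * ‖v‖ * c) := by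
    rw [hnorm]; linarith
  rcases le_total ‖u‖ ‖v‖ with h | h
  · rw [min_eq_left h]
    have := aux_sq ‖u‖ ‖v‖ c s ‖u - v‖ hun h hs0 hslt.le hsq (norm_nonneg _) hdsq
    nlinarith
  · rw [min_eq_right h]
    have hdsq' : ‖u - v‖ ^ 2 ≤ ‖v‖ ^ 2 + ‖u‖ ^ 2 - 2 * (‖v‖ * ‖u‖ * c) := by
      nlinarith
    have := aux_sq ‖v‖ ‖u‖ c s ‖u - v‖ hvn h hs0 hslt.le hsq (norm_nonneg _) hdsq'
    nlinarith
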